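/- If W ⊢ ¬βⱼ for some justification βⱼ of a default δ ∈ D, then δ is never a generating default: for every extension E of (W,D), δ ∉ GD(W,D,E), and moreover (W,D) and (W, D \ {δ}) have exactly the same extensions. -/
import Mathlib


/-- Propositional formulas over natural-number atoms. -/
inductive PForm where
  | atom : ℕ → PForm
  | neg : PForm → PForm
  | conj : PForm → PForm → PForm
  | disj : PForm → PForm → PForm
deriving DecidableEq

/-- Satisfaction of a formula under a valuation. -/
def PForm.sat (v : ℕ → Prop) : PForm → Prop
  | .atom n => v n
  | .neg f => ¬ f.sat v
  | .conj f g => f.sat v ∧ g.sat v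
  | .disj f g => f.sat v ∨ g.sat v

/-- Propositional deductive closure (semantic consequence). -/
def Th (S : Set PForm) : Set PForm :=
  {φ | ∀ v : ℕ → Prop, (∀ ψ ∈ S, ψ.sat v) → φ.sat v}

/-- Propositional entailment `S ⊢ φ`. -/
def Entails (S : Set PForm) (φ : PForm) : Prop := φ ∈ Th S

/-- A default rule (α : β₁,…,βₙ / γ). -/
structure DRule where
  prereq : PForm
  justifs : List PForm
  conseq : PForm

/-- Consequents of a set of defaults. -/
def Conseq (Δ : Set DRule) : Set PForm := DRule.conseq '' Δ

/-- The defining properties of Γ(S): `T` contains `W`, is deductively closed,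
and is closed under defaults applicable w.r.t. `S`. -/
def GammaClosed (W : Set PForm) (D : Set DRule) (S T : Set PForm) : Prop :=
  W ⊆ T ∧ Th T = T ∧
  ∀ δ ∈ D, δ.prereq ∈ T → (∀ β ∈ δ.justifs, PForm.neg β ∉ S) → δ.conseq ∈ T

/-- Γ(S): the smallest set satisfying `GammaClosed`. -/
def Gamma (W : Set PForm) (D : Set DRule) (S : Set PForm) : Set PForm :=
  ⋂₀ {T | GammaClosed W D S T}

/-- Reiter extension: fixed point of Γ. -/
def IsExtension (W : Set PForm) (D : Set DRule) (E : Set PForm) : Prop :=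
  Gamma W D E = E

/-- Generating default set of `E`. -/
def GD (W : Set PForm) (D : Set DRule) (E : Set PForm) : Set DRule :=
  {δ ∈ D | δ.prereq ∈ E ∧ ∀ β ∈ δ.justifs, PForm.neg β ∉ E}

/-- Groundedness of a (finite) set of defaults. -/
def Grounded (W : Set PForm) (Δ : Set DRule) : Prop :=
  ∃ L : List DRule, L.Nodup ∧ {δ | δ ∈ L} = Δ ∧
    ∀ i (h : i < L.length),
      Entails (W ∪ Conseq {δ | δ ∈ L.take i}) (L.get ⟨i, h⟩).prereq


lemma gammaClosed_gamma (W : Set PForm) (D : Set DRule) (S : Set PForm) :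
    GammaClosed W D S (Gamma W D S) := by
  refine ⟨?_, ?_, ?_⟩
  · intro φ hφ T hT
    exact hT.1 hφ
  · apply Set.Subset.antisymm
    · intro φ hφ T hT
      have hsub : Gamma W D S ⊆ T := Set.sInter_subset_of_mem hT
      have : φ ∈ Th T := fun v hv => hφ v (fun ψ hψ => hv ψ (hsub hψ))
      rwa [hT.2.1] at this
    · intro φ hφ v hv
      exact hv φ hφ
  · intro d hd hpre hj T hT
    exact hT.2.2 d hd (hpre T hT) hj

lemma ext_closed {W : Set PForm} {D : Set DRule} {E : Set PForm}
    (h : IsExtension W D E) : GammaClosed W D E E := by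
  have := gammaClosed_gamma W D E
  rwa [h] at this

theorem blocked_default_removable
    (W : Set PForm) (D : Set DRule) (δ : DRule) (hδ : δ ∈ D)
    (hblocked : ∃ β ∈ δ.justifs, Entails W (PForm.neg β)) :
    (∀ E : Set PForm, IsExtension W D E → δ ∉ GD W D E) ∧
    (∀ E : Set PForm, IsExtension W D E ↔ IsExtension W (D \ {δ}) E) := by
  obtain ⟨β, hβ, hent⟩ := hblocked
  have negmem : ∀ (D' : Set DRule) (E : Set PForm), GammaClosed W D' E E →
      PForm.neg β ∈ E := by
    intro D' E hc
    have : PForm.neg β ∈ Th E := fun v hv => hent v (fun ψ hψ => hv ψ (hc.1 hψ))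
    rwa [hc.2.1] at this
  constructor
  · intro E hE hGD
    have hneg := negmem D E (ext_closed hE)
    exact hGD.2.2 β hβ hneg
  · intro E
    have key : ∀ E' : Set PForm, PForm.neg β ∈ E' →
        Gamma W D E' = Gamma W (D \ {δ}) E' := by
      intro E' hneg
      have : {T | GammaClosed W D E' T} = {T | GammaClosed W (D \ {δ}) E' T} := by
        ext T
        constructor
        · rintro ⟨h1, h2, h3⟩
          exact ⟨h1, h2, fun d hd => h3 d hd.1⟩
        · rintro ⟨h1, h2, h3⟩
          refine ⟨h1, h2, fun d hd hpre hj => ?_⟩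
          by_cases hdδ : d = δ
          · subst hdδ; exact absurd hneg (hj β hβ)
          · exact h3 d ⟨hd, hdδ⟩ hpre hj
      unfold Gamma
      rw [this]
    constructor
    · intro hE
      have hneg := negmem D E (ext_closed hE)
      unfold IsExtension at *
      rw [← key E hneg]
      exact hE
    · intro hE
      have hneg := negmem _ E (ext_closed hE)
      unfold IsExtension at *
      rw [key E hneg]
      exact hE
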